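/- Let β be an odd Gaussian integer and η a unit of ℤ[i]. Then the quadratic residue symbol satisfies [α/(ηβ)] = [α/β] for all α ∈ ℤ[i], and [1/β] = [-1/β] = 1, and [i/β] = [-i/β] equals 1 if N(β) ≡ 1 (mod 8) and -1 if N(β) ≡ 5 (mod 8). -/

import Mathlib

/-- The quadratic residue symbol `[α/π]` for an irreducible odd Gaussian `π`:
`0` if `π ∣ α`, `1` if `α` is a nonzero square mod `π`, `-1` otherwise. -/
noncomputable def gQR (α π : GaussianInt) : ℤ := by
  classical
  exact if π ∣ α then 0 else if ∃ β : GaussianInt, π ∣ (β ^ 2 - α) then 1 else -1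

/-- The quadratic residue symbol `[α/β]`, extended multiplicatively in the
denominator over a factorization of `β` into irreducibles. -/
noncomputable def gSym (α β : GaussianInt) : ℤ :=
  ((UniqueFactorizationMonoid.factors β).map fun π => gQR α π).prod

/-- Complex conjugation on Gaussian integers. -/
def gconj (z : GaussianInt) : GaussianInt := ⟨z.re, -z.im⟩

local notation "ℤ[i]" => GaussianInt
open UniqueFactorizationMonoid

noncomputable def gBasis : Module.Basis (Fin 2) ℤ ℤ[i] := Module.Basis.ofEquivFun
  { toFun := fun z => ![z.re, z.im]
    invFun := fun f => ⟨f 0, f 1⟩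
    left_inv := fun z => by simp
    right_inv := fun f => by ext i; fin_cases i <;> simp
    map_add' := fun x y => by ext i; fin_cases i <;> simp
    map_smul' := fun n x => by ext i; fin_cases i <;> simp [Zsqrtd.re_smul, Zsqrtd.im_smul] }

instance : Module.Free ℤ ℤ[i] := Module.Free.of_basis gBasis
instance : Module.Finite ℤ ℤ[i] := Module.Finite.of_basis gBasis

lemma algnorm_eq (x : ℤ[i]) : Algebra.norm ℤ x = x.norm := by
  rw [Algebra.norm_eq_matrix_det gBasis, Matrix.det_fin_two]
  simp [Algebra.leftMulMatrix_eq_repr_mul, Module.Basis.ofEquivFun_repr_apply, Module.Basis.coe_ofEquivFun,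
    gBasis, Function.update, Zsqrtd.norm, Zsqrtd.re_mul, Zsqrtd.im_mul]

lemma card_quot (π : ℤ[i]) : Nat.card (ℤ[i] ⧸ Ideal.span ({π} : Set ℤ[i])) = π.norm.natAbs := by
  have := Ideal.absNorm_span_singleton π
  rwa [Ideal.absNorm_apply, Submodule.cardQuot_apply, algnorm_eq] at this

lemma gQR_congr {π π' : ℤ[i]} (h : Associated π π') (α : ℤ[i]) : gQR α π = gQR α π' := by
  unfold gQR
  congr 1
  · exact propext h.dvd_iff_dvd_left
  · congr 1
    exact propext (exists_congr fun b => h.dvd_iff_dvd_left)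

lemma gSym_unit_mul (η β : ℤ[i]) (hη : IsUnit η) (hβ : β ≠ 0) (α : ℤ[i]) :
    gSym α (η * β) = gSym α β := by
  have hηβ : η * β ≠ 0 := mul_ne_zero hη.ne_zero hβ
  have hassoc : Associated (η * β) β := associated_unit_mul_left β η hη
  have h1 : Associated (factors (η * β)).prod (factors β).prod :=
    ((factors_prod hηβ).trans hassoc).trans (factors_prod hβ).symm
  have hrel : Multiset.Rel Associated (factors (η * β)) (factors β) :=
    factors_unique (fun x hx => irreducible_of_factor x hx)
      (fun x hx => irreducible_of_factor x hx) h1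
  have heq : Multiset.Rel (· = ·) ((factors (η * β)).map fun π => gQR α π)
      ((factors β).map fun π => gQR α π) := by
    rw [Multiset.rel_map]
    exact hrel.mono (fun a _ b _ h => gQR_congr h α)
  rw [Multiset.rel_eq] at heq
  unfold gSym
  rw [heq]

lemma hi2 : (⟨0,1⟩ : ℤ[i]) ^ 2 = -1 := by decide

lemma gQR_one {π : ℤ[i]} (h : Irreducible π) : gQR 1 π = 1 := by
  unfold gQR
  rw [if_neg (fun hd => h.not_isUnit (isUnit_of_dvd_one hd)), if_pos ⟨1, by simp⟩]

lemma gQR_negone {π : ℤ[i]} (h : Irreducible π) : gQR (-1) π = 1 := by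
  unfold gQR
  rw [if_neg (fun hd => h.not_isUnit (isUnit_of_dvd_one (dvd_neg.mp hd))),
    if_pos ⟨⟨0,1⟩, by rw [hi2]; simp⟩]

lemma gQR_i_neg_i (π : ℤ[i]) : gQR ⟨0,1⟩ π = gQR ⟨0,-1⟩ π := by
  have hni : (⟨0,-1⟩ : ℤ[i]) = -⟨0,1⟩ := by decide
  unfold gQR
  congr 1
  · exact propext (by rw [hni, dvd_neg])
  · congr 1
    apply propext
    constructor
    · rintro ⟨b, hb⟩
      refine ⟨b * ⟨0,1⟩, ?_⟩
      have h : (b * ⟨0,1⟩) ^ 2 - (⟨0,-1⟩ : ℤ[i]) = -(b ^ 2 - ⟨0,1⟩) := by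
        rw [mul_pow, hi2, hni]; ring
      rw [h]; exact dvd_neg.mpr hb
    · rintro ⟨b, hb⟩
      refine ⟨b * ⟨0,1⟩, ?_⟩
      have h : (b * ⟨0,1⟩) ^ 2 - (⟨0,1⟩ : ℤ[i]) = -(b ^ 2 - ⟨0,-1⟩) := by
        rw [mul_pow, hi2, hni]; ring
      rw [h]; exact dvd_neg.mpr hb

lemma field_key {F : Type*} [Field F] [Fintype F] (u : F) (hu2 : u ^ 2 = -1) (h2F : (2:F) ≠ 0) :
    (Fintype.card F % 8 = 1 ∨ Fintype.card F % 8 = 5) ∧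
    (IsSquare u ↔ Fintype.card F % 8 = 1) := by
  have hm1 : (-1 : F) ≠ 1 := by
    intro h
    apply h2F
    have h2 : (2 : F) = 1 - (-1) := by ring
    rw [h2, h]; ring
  have hu2ne : u ^ 2 ≠ 1 := by rw [hu2]; exact hm1
  have hu0 : u ≠ 0 := by
    intro h
    rw [h] at hu2
    have h0 : (-1 : F) = 0 := by rw [← hu2]; ring
    exact one_ne_zero (neg_eq_zero.mp h0)
  have hu4 : u ^ 4 = 1 := by
    have h4 : u ^ 4 = (u ^ 2) ^ 2 := by ring
    rw [h4, hu2]; ring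
  have hord : orderOf u = 4 := by
    haveI : Fact (Nat.Prime 2) := ⟨Nat.prime_two⟩
    have := orderOf_eq_prime_pow (x := u) (p := 2) (n := 1)
      (by rw [pow_one]; exact hu2ne) (by rw [show (2:ℕ)^2 = 4 from rfl]; exact hu4)
    simpa using this
  have hdvd4 : (4 : ℕ) ∣ Fintype.card F - 1 := by
    rw [← hord]
    exact orderOf_dvd_of_pow_eq_one (FiniteField.pow_card_sub_one_eq_one u hu0)
  have hq1 : 1 ≤ Fintype.card F := Fintype.card_pos
  have hchar : ringChar F ≠ 2 := by
    intro hc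
    apply h2F
    have hs := (ringChar.spec F 2).mpr (hc ▸ dvd_rfl)
    exact_mod_cast hs
  have hsq : IsSquare u ↔ u ^ (Fintype.card F / 2) = 1 := FiniteField.isSquare_iff hchar hu0
  have hpow : u ^ (Fintype.card F / 2) = 1 ↔ (4 : ℕ) ∣ Fintype.card F / 2 := by
    rw [← hord]
    exact (orderOf_dvd_iff_pow_eq_one).symm
  constructor
  · omega
  · rw [hsq, hpow]
    omega

lemma irr_onei : Irreducible (⟨1,1⟩ : ℤ[i]) := by
  constructor
  · intro h
    have h1 := Zsqrtd.norm_eq_one_iff.2 h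
    revert h1; decide
  · intro a b hab
    have hnorm : a.norm.natAbs * b.norm.natAbs = 2 := by
      have h2 : ((⟨1,1⟩ : ℤ[i]).norm).natAbs = 2 := by decide
      rw [← h2, hab, Zsqrtd.norm_mul, Int.natAbs_mul]
    have hdvd : a.norm.natAbs ∣ 2 := ⟨_, hnorm.symm⟩
    rcases (Nat.prime_two.eq_one_or_self_of_dvd _ hdvd) with h1 | h2
    · exact Or.inl (Zsqrtd.norm_eq_one_iff.1 h1)
    · right
      apply Zsqrtd.norm_eq_one_iff.1
      rw [h2] at hnorm
      omega

lemma gQR_i (π : ℤ[i]) (hp : Prime π) (hodd : ¬ (⟨1,1⟩ : ℤ[i]) ∣ π) :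
    (π.norm.natAbs % 8 = 1 ∧ gQR ⟨0,1⟩ π = 1) ∨
    (π.norm.natAbs % 8 = 5 ∧ gQR ⟨0,1⟩ π = -1) := by
  classical
  have h2 : ¬ π ∣ 2 := by
    intro h
    have h2i : (⟨1,1⟩ : ℤ[i]) ^ 2 = 2 * ⟨0,1⟩ := by decide
    have hd2 : π ∣ (⟨1,1⟩ : ℤ[i]) ^ 2 := h2i ▸ h.mul_right _
    have hπd : π ∣ ⟨1,1⟩ := hp.dvd_of_dvd_pow hd2
    exact hodd ((hp.irreducible.associated_of_dvd irr_onei hπd).symm.dvd)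
  haveI hmax : (Ideal.span ({π} : Set ℤ[i])).IsMaximal :=
    PrincipalIdealRing.isMaximal_of_irreducible hp.irreducible
  letI : Field (ℤ[i] ⧸ Ideal.span ({π} : Set ℤ[i])) := Ideal.Quotient.field _
  have hn0 : π.norm.natAbs ≠ 0 := by
    intro hh
    exact hp.ne_zero ((Zsqrtd.norm_eq_zero_iff (by norm_num : (-1:ℤ) < 0) π).mp
      (Int.natAbs_eq_zero.mp hh))
  haveI : Finite (ℤ[i] ⧸ Ideal.span ({π} : Set ℤ[i])) :=
    Nat.finite_of_card_ne_zero (by rw [card_quot]; exact hn0)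
  haveI : Fintype (ℤ[i] ⧸ Ideal.span ({π} : Set ℤ[i])) := Fintype.ofFinite _
  have hq : Fintype.card (ℤ[i] ⧸ Ideal.span ({π} : Set ℤ[i])) = π.norm.natAbs := by
    rw [← Nat.card_eq_fintype_card, card_quot]
  set u : ℤ[i] ⧸ Ideal.span ({π} : Set ℤ[i]) := Ideal.Quotient.mk _ ⟨0,1⟩ with hudef
  have hu2 : u ^ 2 = -1 := by
    rw [hudef, ← map_pow, hi2, map_neg, map_one]
  have h2F : (2 : ℤ[i] ⧸ Ideal.span ({π} : Set ℤ[i])) ≠ 0 := by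
    intro h
    apply h2
    have h2' : (Ideal.Quotient.mk (Ideal.span ({π} : Set ℤ[i]))) 2 = 0 :=
      (map_ofNat (Ideal.Quotient.mk (Ideal.span ({π} : Set ℤ[i]))) 2).trans h
    rw [Ideal.Quotient.eq_zero_iff_mem, Ideal.mem_span_singleton] at h2'
    exact h2'
  obtain ⟨hcases, hsq8⟩ := field_key u hu2 h2F
  rw [hq] at hcases hsq8
  have hinotdvd : ¬ π ∣ (⟨0,1⟩ : ℤ[i]) := by
    intro h
    exact hp.not_unit (isUnit_of_dvd_unit h (Zsqrtd.norm_eq_one_iff.1 (by decide)))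
  have hex : (∃ b : ℤ[i], π ∣ b ^ 2 - ⟨0,1⟩) ↔ IsSquare u := by
    constructor
    · rintro ⟨b, hb⟩
      refine ⟨Ideal.Quotient.mk _ b, ?_⟩
      rw [hudef, ← map_mul, Ideal.Quotient.mk_eq_mk_iff_sub_mem, Ideal.mem_span_singleton]
      have h : (⟨0,1⟩ : ℤ[i]) - b * b = -(b ^ 2 - ⟨0,1⟩) := by ring
      rw [h]
      exact dvd_neg.mpr hb
    · rintro ⟨r, hr⟩
      obtain ⟨b, rfl⟩ := Ideal.Quotient.mk_surjective r
      refine ⟨b, ?_⟩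
      rw [hudef, ← map_mul, Ideal.Quotient.mk_eq_mk_iff_sub_mem, Ideal.mem_span_singleton] at hr
      have h : b ^ 2 - (⟨0,1⟩ : ℤ[i]) = -(⟨0,1⟩ - b * b) := by ring
      rw [h]
      exact dvd_neg.mpr hr
  unfold gQR
  rw [if_neg hinotdvd]
  rcases hcases with h8 | h8
  · left
    exact ⟨h8, by rw [if_pos (hex.mpr (hsq8.mpr h8))]⟩
  · right
    refine ⟨h8, ?_⟩
    rw [if_neg]
    intro hc
    have := hsq8.mp (hex.mp hc)
    omega

lemma prod_key : ∀ (s : Multiset ℤ[i]), (∀ π ∈ s, Prime π ∧ ¬ (⟨1,1⟩ : ℤ[i]) ∣ π) →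
    ((s.map Zsqrtd.norm).prod.natAbs % 8 = 1 ∧ (s.map fun π => gQR ⟨0,1⟩ π).prod = 1) ∨
    ((s.map Zsqrtd.norm).prod.natAbs % 8 = 5 ∧ (s.map fun π => gQR ⟨0,1⟩ π).prod = -1) := by
  intro s
  induction s using Multiset.induction with
  | empty => intro _; left; simp
  | cons π s ih =>
    intro h
    obtain ⟨hp, hoddπ⟩ := h π (Multiset.mem_cons_self π s)
    have hs := ih (fun x hx => h x (Multiset.mem_cons_of_mem hx))
    have hk := gQR_i π hp hoddπ
    simp only [Multiset.map_cons, Multiset.prod_cons, Int.natAbs_mul]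
    rcases hk with ⟨h1, h2⟩ | ⟨h1, h2⟩ <;> rcases hs with ⟨h3, h4⟩ | ⟨h3, h4⟩
    · left; rw [h2, h4, Nat.mul_mod, h1, h3]; norm_num
    · right; rw [h2, h4, Nat.mul_mod, h1, h3]; norm_num
    · right; rw [h2, h4, Nat.mul_mod, h1, h3]; norm_num
    · left; rw [h2, h4, Nat.mul_mod, h1, h3]; norm_num

/-- For `β` an odd Gaussian integer and `η` a unit of `ℤ[i]`:
`[α/(ηβ)] = [α/β]` for all `α`; `[1/β] = [-1/β] = 1`; and
`[i/β] = [-i/β]` equals `1` if `N(β) ≡ 1 (mod 8)` and `-1` if `N(β) ≡ 5 (mod 8)`. -/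
theorem stmt9 (β : GaussianInt) (hodd : ¬ (⟨1, 1⟩ : GaussianInt) ∣ β)
    (η : GaussianInt) (hη : IsUnit η) :
    (∀ α : GaussianInt, gSym α (η * β) = gSym α β) ∧
    gSym 1 β = 1 ∧ gSym (-1) β = 1 ∧
    gSym ⟨0, 1⟩ β = gSym ⟨0, -1⟩ β ∧
    (β.norm % 8 = 1 → gSym ⟨0, 1⟩ β = 1) ∧
    (β.norm % 8 = 5 → gSym ⟨0, 1⟩ β = -1) := by

  have hβ0 : β ≠ 0 := fun h => hodd (h ▸ dvd_zero _)
  have hfac : ∀ π ∈ factors β, Prime π ∧ ¬ (⟨1,1⟩ : ℤ[i]) ∣ π := fun π hπ =>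
    ⟨prime_of_factor π hπ, fun hd => hodd (hd.trans (dvd_of_mem_factors hπ))⟩
  have hnorm : β.norm.natAbs = ((factors β).map Zsqrtd.norm).prod.natAbs := by
    obtain ⟨v, hv⟩ := factors_prod hβ0
    have hβn : β.norm = ((factors β).map Zsqrtd.norm).prod := by
      conv_lhs => rw [← hv]
      rw [Zsqrtd.norm_mul, (Zsqrtd.norm_eq_one_iff' (by norm_num) _).2 v.isUnit, mul_one]
      exact (Multiset.prod_hom (factors β) Zsqrtd.normMonoidHom).symm
    rw [hβn]
  have hkey := prod_key (factors β) hfac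
  have hnn : 0 ≤ β.norm := Zsqrtd.norm_nonneg (by norm_num) β
  refine ⟨fun α => gSym_unit_mul η β hη hβ0 α, ?_, ?_, ?_, ?_, ?_⟩
  · apply Multiset.prod_eq_one
    intro x hx
    obtain ⟨π, hπ, rfl⟩ := Multiset.mem_map.mp hx
    exact gQR_one (irreducible_of_factor π hπ)
  · apply Multiset.prod_eq_one
    intro x hx
    obtain ⟨π, hπ, rfl⟩ := Multiset.mem_map.mp hx
    exact gQR_negone (irreducible_of_factor π hπ)
  · unfold gSym
    rw [Multiset.map_congr rfl (fun π _ => gQR_i_neg_i π)]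
  · intro h
    have h8 : β.norm.natAbs % 8 = 1 := by omega
    rw [hnorm] at h8
    rcases hkey with ⟨_, h2⟩ | ⟨h1, _⟩
    · exact h2
    · omega
  · intro h
    have h8 : β.norm.natAbs % 8 = 5 := by omega
    rw [hnorm] at h8
    rcases hkey with ⟨h1, _⟩ | ⟨_, h2⟩
    · omega
    · exact h2
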